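/- Let φ ∈ ℝ with |φ| < 1, let c > 0, and let f(λ) = (1/2π)/|1 − φe^{iλ}|² be the spectral density of the causal AR(1) process z_t = φ z_{t−1} + ε_t. Then for any s ∈ ℂ with Im s > 0, the equation z = −1/s + (1/2π)∫_0^{2π}[c·s + (2πf(λ))^{-1}]^{-1} dλ is equivalent to z = −1/s + 1/√((cs + 1 + φ²)² − 4φ²), where √· is the complex square root with nonnegative imaginary part. In particular, when φ = 0 this reduces to z = −1/s + 1/(cs + 1), the equation characterising the standard Marčenko-Pastur law of index c. -/

import Mathlib

open MeasureTheory Complex Real Filter Topology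

/-- The complex square root with nonnegative imaginary part. -/
noncomputable def sqrtIm (z : ℂ) : ℂ :=
  if 0 ≤ (z ^ (1 / 2 : ℂ)).im then z ^ (1 / 2 : ℂ) else -(z ^ (1 / 2 : ℂ))

lemma sqrtIm_sq_eq (z : ℂ) : (sqrtIm z) ^ 2 = z := by
  have h : (z ^ ((2:ℕ):ℂ)⁻¹) ^ (2:ℕ) = z := by
    rcases eq_or_ne z 0 with rfl | hz
    · simp [Complex.zero_cpow (by norm_num : ((2:ℕ):ℂ)⁻¹ ≠ 0)]
    · exact Complex.cpow_nat_inv_pow z two_ne_zero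
  have h' : (z ^ (1/2 : ℂ)) ^ 2 = z := by
    rw [show (1/2 : ℂ) = ((2:ℕ):ℂ)⁻¹ by norm_num]; exact_mod_cast h
  unfold sqrtIm
  split
  · exact h'
  · rw [neg_pow, neg_one_sq, one_mul]; exact h'

lemma sqrtIm_im_nonneg (z : ℂ) : 0 ≤ (sqrtIm z).im := by
  unfold sqrtIm; split
  · assumption
  · simp only [neg_im]; linarith [not_le.mp (by assumption)]

lemma sqrtIm_of_sq (w : ℂ) (hw : 0 < w.im) : sqrtIm (w ^ 2) = w := by
  have hsq := sqrtIm_sq_eq (w ^ 2)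
  have h0 : (sqrtIm (w ^ 2) - w) * (sqrtIm (w ^ 2) + w) = 0 := by linear_combination hsq
  rcases mul_eq_zero.mp h0 with h | h
  · exact sub_eq_zero.mp h
  · exfalso
    have he : sqrtIm (w ^ 2) = -w := by linear_combination h
    have := sqrtIm_im_nonneg (w ^ 2)
    rw [he, neg_im] at this
    linarith

lemma cont_g {w : ℂ} (hw : ‖w‖ ≠ 1) :
    Continuous (fun t : ℝ => Complex.exp (Complex.I * t) * (Complex.exp (Complex.I * t) - w)⁻¹) := by
  have hne : ∀ t : ℝ, Complex.exp (Complex.I * t) - w ≠ 0 := by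
    intro t h
    apply hw
    rw [← sub_eq_zero.mp h, mul_comm]
    exact Complex.norm_exp_ofReal_mul_I t
  have hc : Continuous fun t : ℝ => Complex.exp (Complex.I * t) :=
    Complex.continuous_exp.comp (continuous_const.mul Complex.continuous_ofReal)
  exact hc.mul ((hc.sub continuous_const).inv₀ hne)

lemma int_inside {w : ℂ} (hw : ‖w‖ < 1) :
    ∫ t in (0:ℝ)..(2*π), Complex.exp (Complex.I * t) * (Complex.exp (Complex.I * t) - w)⁻¹
      = 2 * π := by
  have h := circleIntegral.integral_sub_inv_of_mem_ball (c := 0) (R := 1) (w := w)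
    (by simpa using hw)
  rw [circleIntegral] at h
  simp only [deriv_circleMap, circleMap, ofReal_one, one_mul, zero_add, smul_eq_mul] at h
  have h2 : ∫ θ in (0:ℝ)..(2*π), Complex.I *
      (Complex.exp (Complex.I * θ) * (Complex.exp (Complex.I * θ) - w)⁻¹) = 2 * π * Complex.I := by
    rw [← h]
    apply intervalIntegral.integral_congr
    intro θ _
    simp only [mul_comm ((θ:ℂ)) Complex.I]
    ring
  rw [intervalIntegral.integral_const_mul] at h2
  have hI : (Complex.I : ℂ) ≠ 0 := Complex.I_ne_zero
  exact mul_left_cancel₀ hI (by rw [h2]; ring)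

lemma int_outside {w : ℂ} (hw : 1 < ‖w‖) :
    ∫ t in (0:ℝ)..(2*π), Complex.exp (Complex.I * t) * (Complex.exp (Complex.I * t) - w)⁻¹
      = 0 := by
  have hcont : ContinuousOn (fun z : ℂ => (z - w)⁻¹) (Metric.closedBall 0 1) := by
    apply ContinuousOn.inv₀ (Continuous.continuousOn (by continuity))
    intro z hz h0
    rw [sub_eq_zero.mp h0] at hz
    simp only [Metric.mem_closedBall, dist_zero_right] at hz
    linarith
  have h := circleIntegral_eq_zero_of_differentiable_on_off_countable (R := 1) (c := 0)
    (f := fun z => (z - w)⁻¹) zero_le_one Set.countable_empty hcont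
    (fun z hz => by
      apply DifferentiableAt.inv (differentiableAt_id.sub_const w)
      intro h0
      simp only [id] at h0
      rw [sub_eq_zero.mp h0] at hz
      simp only [Metric.mem_ball, dist_zero_right, Set.mem_diff] at hz
      linarith [hz.1])
  rw [circleIntegral] at h
  simp only [deriv_circleMap, circleMap, ofReal_one, one_mul, zero_add, smul_eq_mul] at h
  have h2 : ∫ θ in (0:ℝ)..(2*π), Complex.I *
      (Complex.exp (Complex.I * θ) * (Complex.exp (Complex.I * θ) - w)⁻¹) = 0 := by
    rw [← h]
    apply intervalIntegral.integral_congr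
    intro θ _
    simp only [mul_comm ((θ:ℂ)) Complex.I]
    ring
  rw [intervalIntegral.integral_const_mul] at h2
  exact (mul_eq_zero.mp h2).resolve_left Complex.I_ne_zero

lemma two_cos_eq (t : ℝ) : 2 * ((Real.cos t : ℝ) : ℂ)
    = Complex.exp (Complex.I * t) + Complex.exp (-(Complex.I * t)) := by
  rw [Complex.ofReal_cos, Complex.cos]
  ring_nf

lemma exp_mul_exp_neg (t : ℝ) :
    Complex.exp (Complex.I * t) * Complex.exp (-(Complex.I * t)) = 1 := by
  rw [← Complex.exp_add]; simp

-- helper: product of two upper-half-plane numbers is not a nonneg real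
lemma mul_ne_ofReal_nonneg {z w : ℂ} (hz : 0 < z.im) (hw : 0 < w.im) {x : ℝ} (hx : 0 ≤ x) :
    z * w ≠ (x : ℂ) := by
  intro h
  have hz0 : z ≠ 0 := fun h0 => by simp [h0] at hz
  have hwx : w = (x : ℂ) * z⁻¹ := by
    field_simp
    linear_combination h
  rcases hx.eq_or_lt with rfl | hx'
  · rw [Complex.ofReal_zero, zero_mul] at hwx
    simp [hwx] at hw
  · have : w.im = x * z⁻¹.im := by rw [hwx]; simp [Complex.mul_im]
    have h2 : z⁻¹.im < 0 := by
      rw [Complex.inv_im]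
      apply div_neg_of_neg_of_pos (by linarith)
      exact Complex.normSq_pos.mpr hz0
    nlinarith

lemma key_integral (φ : ℝ) (a : ℂ) (ha : 0 < a.im) :
    ((1 / (2 * π) : ℝ) : ℂ) * ∫ t in (0:ℝ)..(2*π), (a - 2 * (φ:ℂ) * ((Real.cos t : ℝ) : ℂ))⁻¹
      = (sqrtIm (a ^ 2 - 4 * (φ:ℂ) ^ 2))⁻¹ := by
  have hπ : (π : ℝ) ≠ 0 := Real.pi_ne_zero
  rcases eq_or_ne φ 0 with rfl | hφ0
  · simp only [Complex.ofReal_zero, mul_zero, zero_mul, sub_zero, mul_zero, zero_pow]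
    rw [intervalIntegral.integral_const]
    have : sqrtIm (a ^ 2 - 4 * (0:ℂ) ^ 2) = a := by
      rw [show a ^ 2 - 4 * (0:ℂ) ^ 2 = a ^ 2 by ring]
      exact sqrtIm_of_sq a ha
    rw [this]
    push_cast
    field_simp
    rw [sub_zero, Complex.real_smul]; push_cast; ring
  · -- φ ≠ 0
    set D : ℂ := a ^ 2 - 4 * (φ:ℂ) ^ 2 with hD
    set u : ℂ := sqrtIm D with hu
    have hu2 : u ^ 2 = D := sqrtIm_sq_eq D
    have hDfact : D = (a - 2 * φ) * (a + 2 * φ) := by rw [hD]; ring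
    have hDne : ∀ x : ℝ, 0 ≤ x → D ≠ (x:ℂ) := by
      intro x hx
      rw [hDfact]
      apply mul_ne_ofReal_nonneg _ _ hx
      · simpa using ha
      · simpa using ha
    have hD0 : D ≠ 0 := by simpa using hDne 0 le_rfl
    have huim : 0 < u.im := by
      rcases (sqrtIm_im_nonneg D).eq_or_lt with h | h
      · exfalso
        have him0 : u.im = 0 := by rw [hu]; exact h.symm
        have hureal : u = ((u.re : ℝ) : ℂ) := by
          apply Complex.ext
          · simp
          · simp [him0]
        apply hDne (u.re ^ 2) (sq_nonneg _)
        rw [← hu2]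
        nth_rewrite 1 [hureal]
        push_cast
        ring
      · exact h
    have hu0 : u ≠ 0 := fun h => by simp [h] at huim
    have hφC : (φ:ℂ) ≠ 0 := Complex.ofReal_ne_zero.mpr hφ0
    -- the two roots
    set p₀ : ℂ := (a - u) / (2 * φ) with hp₀
    set q₀ : ℂ := (a + u) / (2 * φ) with hq₀
    have hsum₀ : (φ:ℂ) * (p₀ + q₀) = a := by rw [hp₀, hq₀]; field_simp; ring
    have hprod₀ : p₀ * q₀ = 1 := by
      rw [hp₀, hq₀]
      field_simp
      linear_combination -hu2 + hD
    -- no root on the unit circle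
    have hnotone : ∀ r r' : ℂ, (φ:ℂ) * (r + r') = a → r * r' = 1 → ‖r‖ ≠ 1 := by
      intro r r' hsum hprod h1
      have hr0 : r ≠ 0 := by
        intro h; rw [h] at h1; simp at h1
      have hr' : r' = (starRingEnd ℂ) r := by
        have : r' = r⁻¹ := by field_simp; linear_combination hprod
        rw [this, Complex.inv_def, Complex.normSq_eq_norm_sq, h1]
        simp
      have : a.im = 0 := by
        rw [← hsum, hr']
        simp [Complex.mul_im, Complex.add_im]
      linarith
    have habsprod : ‖p₀‖ * ‖q₀‖ = 1 := by
      rw [← norm_mul, hprod₀, norm_one]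
    have hp₀1 : ‖p₀‖ ≠ 1 := hnotone p₀ q₀ hsum₀ hprod₀
    -- choose inside/outside roots
    obtain ⟨p, q, hsum, hprod, hpin, hqout⟩ :
        ∃ p q : ℂ, (φ:ℂ) * (p + q) = a ∧ p * q = 1 ∧ ‖p‖ < 1 ∧ 1 < ‖q‖ := by
      rcases hp₀1.lt_or_gt with h | h
      · refine ⟨p₀, q₀, hsum₀, hprod₀, h, ?_⟩
        nlinarith [norm_nonneg p₀, norm_nonneg q₀]
      · refine ⟨q₀, p₀, by rw [← hsum₀]; ring, by rw [← hprod₀]; ring, ?_, h⟩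
        nlinarith [norm_nonneg p₀, norm_nonneg q₀]
    have hXsq : ((φ:ℂ) * (q - p)) ^ 2 = D := by
      rw [hD]
      linear_combination ((φ:ℂ) * (p + q) + a) * hsum - 4 * (φ:ℂ) ^ 2 * hprod
    -- pointwise identity
    have hpt : ∀ t : ℝ, (a - 2 * (φ:ℂ) * ((Real.cos t : ℝ) : ℂ))⁻¹
        = ((φ:ℂ) * (q - p))⁻¹ *
          (Complex.exp (Complex.I * t) * (Complex.exp (Complex.I * t) - p)⁻¹
            - Complex.exp (Complex.I * t) * (Complex.exp (Complex.I * t) - q)⁻¹) := by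
      intro t
      set z : ℂ := Complex.exp (Complex.I * t) with hz
      have hz0 : z ≠ 0 := Complex.exp_ne_zero _
      have habsz : ‖z‖ = 1 := by rw [hz, mul_comm]; exact Complex.norm_exp_ofReal_mul_I t
      have hzp : z - p ≠ 0 := by
        intro h; rw [sub_eq_zero] at h; rw [h] at habsz; exact absurd habsz (ne_of_lt hpin)
      have hzq : z - q ≠ 0 := by
        intro h; rw [sub_eq_zero] at h; rw [h] at habsz; exact absurd habsz (ne_of_gt hqout)
      have hcos2 : 2 * ((Real.cos t : ℝ) : ℂ) * z = z ^ 2 + 1 := by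
        have h1 := two_cos_eq t
        have h2 := exp_mul_exp_neg t
        rw [← hz] at h1 h2
        linear_combination z * h1 + h2
      have hden : (a - 2 * (φ:ℂ) * ((Real.cos t : ℝ) : ℂ)) * z = -(φ:ℂ) * ((z - p) * (z - q)) := by
        linear_combination -(φ:ℂ) * hcos2 - z * hsum + (φ:ℂ) * hprod
      have hA0 : a - 2 * (φ:ℂ) * ((Real.cos t : ℝ) : ℂ) ≠ 0 := by
        intro h
        rw [h, zero_mul] at hden
        exact (mul_ne_zero (neg_ne_zero.mpr hφC) (mul_ne_zero hzp hzq)) hden.symm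
      have hpq : p ≠ q := by
        intro h; rw [h] at hpin; linarith
      have hXne : (φ:ℂ) * (q - p) ≠ 0 := mul_ne_zero hφC (sub_ne_zero.mpr (Ne.symm hpq))
      set A : ℂ := a - 2 * (φ:ℂ) * ((Real.cos t : ℝ) : ℂ) with hA
      symm
      apply eq_inv_of_mul_eq_one_left
      field_simp
      linear_combination (p - q) * hden
    -- compute the integral
    have hip := cont_g (ne_of_lt hpin)
    have hiq := cont_g (ne_of_gt hqout)
    have hI0 : (∫ t in (0:ℝ)..(2*π), (a - 2 * (φ:ℂ) * ((Real.cos t : ℝ) : ℂ))⁻¹)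
        = ((φ:ℂ) * (q - p))⁻¹ * (2 * (π:ℂ) - 0) := by
      rw [intervalIntegral.integral_congr (fun t _ => hpt t),
        intervalIntegral.integral_const_mul,
        intervalIntegral.integral_sub (hip.intervalIntegrable _ _) (hiq.intervalIntegrable _ _),
        int_inside hpin, int_outside hqout]
    -- the integrand has nonpositive imaginary part
    have hcontA : Continuous (fun t : ℝ => (a - 2 * (φ:ℂ) * ((Real.cos t : ℝ) : ℂ))⁻¹) := by
      apply Continuous.inv₀
      · exact continuous_const.sub (continuous_const.mul
          (Complex.continuous_ofReal.comp Real.continuous_cos))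
      · intro t h0
        have : (a - 2 * (φ:ℂ) * ((Real.cos t : ℝ) : ℂ)).im = a.im := by simp
        rw [h0] at this
        simp at this
        linarith
    have him : (∫ t in (0:ℝ)..(2*π), (a - 2 * (φ:ℂ) * ((Real.cos t : ℝ) : ℂ))⁻¹).im ≤ 0 := by
      rw [intervalIntegral.integral_of_le (by positivity : (0:ℝ) ≤ 2*π)]
      have heq := integral_im (𝕜 := ℂ)
        (μ := MeasureTheory.volume.restrict (Set.Ioc (0:ℝ) (2*π))) hcontA.integrableOn_Ioc
      simp only [RCLike.im_to_complex] at heq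
      rw [← heq]
      apply MeasureTheory.integral_nonpos
      intro t
      have himA : (a - 2 * (φ:ℂ) * ((Real.cos t : ℝ) : ℂ)).im = a.im := by simp
      simp only [Pi.zero_apply]
      rw [Complex.inv_im, himA]
      apply div_nonpos_of_nonpos_of_nonneg (by linarith) (Complex.normSq_nonneg _)
    -- identify the square root
    have hXu : (φ:ℂ) * (q - p) = u := by
      have h0 : ((φ:ℂ) * (q - p) - u) * ((φ:ℂ) * (q - p) + u) = 0 := by
        linear_combination hXsq - hu2
      rcases mul_eq_zero.mp h0 with h | h
      · linear_combination h
      · exfalso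
        have hX : (φ:ℂ) * (q - p) = -u := by linear_combination h
        rw [hI0, hX] at him
        have : ((-u)⁻¹ * (2 * (π:ℂ) - 0)).im = (u.im / Complex.normSq u) * (2*π) := by
          rw [sub_zero, inv_neg]
          simp [Complex.mul_im, Complex.inv_im, Complex.inv_re]
          ring
        rw [this] at him
        have hnsq : 0 < Complex.normSq u := Complex.normSq_pos.mpr hu0
        nlinarith [Real.pi_pos, div_pos huim hnsq]
    rw [hI0, hXu]
    rw [sub_zero]
    push_cast
    rw [one_div, mul_comm (u⁻¹) _, ← mul_assoc]
    rw [inv_mul_cancel₀ (by exact_mod_cast mul_ne_zero two_ne_zero hπ : (2*(π:ℂ)) ≠ 0), one_mul]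

/-- The characterising equation of the LSD for an AR(1) process reduces to
the explicit equation (10); for φ = 0 it is that of the Marčenko-Pastur law. -/
theorem ar1_lsd_equation
    (φ c : ℝ) (hφ : |φ| < 1) (hc : 0 < c)
    -- the spectral density of the causal AR(1) process
    (f : ℝ → ℝ)
    (hf : ∀ lam : ℝ, f lam = (1 / (2 * π)) /
        (‖1 - (φ : ℂ) * Complex.exp (Complex.I * lam)‖) ^ 2)
    (s : ℂ) (hs : 0 < s.im) :
    ∀ z : ℂ,
      ((z = -s⁻¹ + ((1 / (2 * π) : ℝ) : ℂ) *
          ∫ lam in (0:ℝ)..(2 * π), ((c : ℂ) * s + ((2 * π * f lam : ℝ) : ℂ)⁻¹)⁻¹)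
        ↔
        (z = -s⁻¹ + (sqrtIm (((c : ℂ) * s + 1 + (φ : ℂ) ^ 2) ^ 2 - 4 * (φ : ℂ) ^ 2))⁻¹)) ∧
      -- in particular, for φ = 0 the equation characterises the standard
      -- Marčenko-Pastur law of index c
      (φ = 0 →
        ((z = -s⁻¹ + ((1 / (2 * π) : ℝ) : ℂ) *
            ∫ lam in (0:ℝ)..(2 * π), ((c : ℂ) * s + ((2 * π * f lam : ℝ) : ℂ)⁻¹)⁻¹)
          ↔
          (z = -s⁻¹ + ((c : ℂ) * s + 1)⁻¹))) := by
  intro z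
  have hπ : (π : ℝ) ≠ 0 := Real.pi_ne_zero
  have haim : 0 < ((c : ℂ) * s + 1 + (φ : ℂ) ^ 2).im := by
    have : ((c : ℂ) * s + 1 + (φ : ℂ) ^ 2).im = c * s.im := by
      simp [Complex.add_im, Complex.mul_im, pow_two]
    rw [this]
    exact mul_pos hc hs
  have hint : ∀ lam : ℝ, ((c : ℂ) * s + ((2 * π * f lam : ℝ) : ℂ)⁻¹)⁻¹
      = (((c : ℂ) * s + 1 + (φ : ℂ) ^ 2) - 2 * (φ:ℂ) * ((Real.cos lam : ℝ) : ℂ))⁻¹ := by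
    intro lam
    congr 1
    have hB : (2 * π * f lam : ℝ)
        = ((‖1 - (φ : ℂ) * Complex.exp (Complex.I * lam)‖) ^ 2)⁻¹ := by
      rw [hf lam]
      field_simp
    have hcast : (((‖1 - (φ : ℂ) * Complex.exp (Complex.I * lam)‖) ^ 2 : ℝ) : ℂ)
        = 1 + (φ:ℂ) ^ 2 - 2 * (φ:ℂ) * ((Real.cos lam : ℝ) : ℂ) := by
      rw [Complex.sq_norm, ← Complex.mul_conj]
      have hconj : (starRingEnd ℂ) (1 - (φ : ℂ) * Complex.exp (Complex.I * lam))
          = 1 - (φ : ℂ) * Complex.exp (-(Complex.I * lam)) := by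
        rw [map_sub, map_one, map_mul, Complex.conj_ofReal, ← Complex.exp_conj]
        congr 2
        simp [Complex.conj_I, Complex.conj_ofReal]
      rw [hconj]
      linear_combination (φ:ℂ) * two_cos_eq lam + (φ:ℂ) ^ 2 * exp_mul_exp_neg lam
    rw [hB, Complex.ofReal_inv, inv_inv, hcast]
    ring
  have hmain : ((1 / (2 * π) : ℝ) : ℂ) *
      (∫ lam in (0:ℝ)..(2 * π), ((c : ℂ) * s + ((2 * π * f lam : ℝ) : ℂ)⁻¹)⁻¹)
      = (sqrtIm ((((c : ℂ) * s + 1 + (φ : ℂ) ^ 2)) ^ 2 - 4 * (φ : ℂ) ^ 2))⁻¹ := by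
    rw [intervalIntegral.integral_congr (fun lam _ => hint lam)]
    exact key_integral φ ((c : ℂ) * s + 1 + (φ : ℂ) ^ 2) haim
  have hiff1 : (z = -s⁻¹ + ((1 / (2 * π) : ℝ) : ℂ) *
      ∫ lam in (0:ℝ)..(2 * π), ((c : ℂ) * s + ((2 * π * f lam : ℝ) : ℂ)⁻¹)⁻¹)
      ↔ (z = -s⁻¹ + (sqrtIm (((c : ℂ) * s + 1 + (φ : ℂ) ^ 2) ^ 2 - 4 * (φ : ℂ) ^ 2))⁻¹) := by
    rw [hmain]
  refine ⟨hiff1, fun h0 => ?_⟩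
  subst h0
  rw [hiff1]
  have him : 0 < ((c : ℂ) * s + 1).im := by
    have : ((c : ℂ) * s + 1).im = c * s.im := by simp [Complex.add_im, Complex.mul_im]
    rw [this]
    exact mul_pos hc hs
  have harg : ((c : ℂ) * s + 1 + ((0:ℝ) : ℂ) ^ 2) ^ 2 - 4 * ((0:ℝ) : ℂ) ^ 2
      = ((c : ℂ) * s + 1) ^ 2 := by push_cast; ring
  rw [harg, sqrtIm_of_sq _ him]
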